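/- In the condition characterizing feasibility (∑_S α_S y_S ≤ ∑_{(i,j)} max_{S⊙(i,j)} α_S · π_{ij} for all α: 2^V → ℝ≥0), it suffices to check α's that take only one positive value on their support; equivalently, it suffices to check, for every family 𝕊 ⊆ 2^V, the inequality ∑_{S∈𝕊} y_S ≤ ∑_{(i,j): 𝕊⊙(i,j)} π_{ij}. -/

import Mathlib

open Finset

/-- `S` separates the pair `(i, j)` if it contains exactly one of `i`, `j`. -/
def SepSet {V : Type*} (S : Finset V) (i j : V) : Prop :=
  (i ∈ S ∧ j ∉ S) ∨ (i ∉ S ∧ j ∈ S)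

/-- A family `𝕊` of subsets separates `(i, j)` if some member of `𝕊` does. -/
def SepFam {V : Type*} (𝕊 : Finset (Finset V)) (i j : V) : Prop :=
  ∃ S ∈ 𝕊, SepSet S i j

instance {V : Type*} [DecidableEq V] (S : Finset V) (i j : V) :
    Decidable (SepSet S i j) := by unfold SepSet; infer_instance

instance {V : Type*} [DecidableEq V] (𝕊 : Finset (Finset V)) (i j : V) :
    Decidable (SepFam 𝕊 i j) := by unfold SepFam; infer_instance

/-- `max_{S : S ⊙ (i,j)} α_S`, with the maximum over the empty set taken to be `0`. -/
noncomputable def maxSep {V : Type*} [Fintype V] [DecidableEq V]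
    (α : Finset V → ℝ) (i j : V) : ℝ :=
  (insert (0 : ℝ) ((Finset.univ.filter (fun S : Finset V => SepSet S i j)).image α)).max'
    (Finset.insert_nonempty _ _)

section Aux

variable {V : Type*} [Fintype V] [DecidableEq V]

lemma maxSep_nonneg (α : Finset V → ℝ) (i j : V) : 0 ≤ maxSep α i j :=
  Finset.le_max' _ _ (Finset.mem_insert_self _ _)

lemma le_maxSep {α : Finset V → ℝ} {i j : V} {S : Finset V} (h : SepSet S i j) :
    α S ≤ maxSep α i j :=
  Finset.le_max' _ _ (Finset.mem_insert_of_mem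
    (Finset.mem_image_of_mem _ (by simp [h])))

lemma maxSep_le {α : Finset V → ℝ} {i j : V} {c : ℝ} (hc : 0 ≤ c)
    (h : ∀ S, SepSet S i j → α S ≤ c) : maxSep α i j ≤ c := by
  apply Finset.max'_le
  intro x hx
  rcases Finset.mem_insert.mp hx with rfl | hx
  · exact hc
  · obtain ⟨S, hS, rfl⟩ := Finset.mem_image.mp hx
    exact h S (by simpa using hS)

lemma maxSep_indicator (𝕊 : Finset (Finset V)) {c : ℝ} (hc : 0 ≤ c) (i j : V) :
    maxSep (fun S => if S ∈ 𝕊 then c else 0) i j = if SepFam 𝕊 i j then c else 0 := by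
  by_cases hsep : SepFam 𝕊 i j
  · rw [if_pos hsep]
    obtain ⟨S0, hS0, hsepS0⟩ := hsep
    refine le_antisymm (maxSep_le hc fun S _ => by split <;> simp [hc]) ?_
    have := le_maxSep (α := fun S => if S ∈ 𝕊 then c else 0) hsepS0
    simpa [hS0] using this
  · simp only [hsep, if_false]
    refine le_antisymm (maxSep_le le_rfl fun S hS => ?_) (maxSep_nonneg _ _ _)
    have : S ∉ 𝕊 := fun h => hsep ⟨S, h, hS⟩
    simp [this]

lemma maxSep_decomp {α : Finset V → ℝ} (hα : ∀ S, 0 ≤ α S) {m : ℝ} (hm : 0 < m)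
    (hmin : ∀ S, 0 < α S → m ≤ α S) (i j : V) :
    maxSep α i j =
      maxSep (fun S => if 0 < α S then α S - m else 0) i j +
        (if SepFam (Finset.univ.filter fun S => 0 < α S) i j then m else 0) := by
  set β : Finset V → ℝ := fun S => if 0 < α S then α S - m else 0 with hβ
  by_cases hsep : SepFam (Finset.univ.filter fun S => 0 < α S) i j
  · rw [if_pos hsep]
    obtain ⟨S0, hS0, hsepS0⟩ := hsep
    have hS0pos : 0 < α S0 := by simpa using hS0
    have hmle : m ≤ maxSep α i j := le_trans (hmin S0 hS0pos) (le_maxSep hsepS0)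
    refine le_antisymm ?_ ?_
    · refine maxSep_le (by linarith [maxSep_nonneg β i j]) fun S hS => ?_
      by_cases hp : 0 < α S
      · have : β S = α S - m := by simp [hβ, hp]
        have h2 := le_maxSep (α := β) hS
        linarith
      · have : α S = 0 := le_antisymm (not_lt.mp hp) (hα S)
        linarith [maxSep_nonneg β i j]
    · have : maxSep β i j ≤ maxSep α i j - m := by
        refine maxSep_le (by linarith) fun S hS => ?_
        by_cases hp : 0 < α S
        · have : β S = α S - m := by simp [hβ, hp]
          have h2 := le_maxSep (α := α) hS
          linarith
        · have : β S = 0 := by simp [hβ, hp]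
          linarith
      linarith
  · have hz : ∀ S, SepSet S i j → α S = 0 := by
      intro S hS
      by_contra h
      exact hsep ⟨S, by simp [lt_of_le_of_ne (hα S) (Ne.symm h)], hS⟩
    have h1 : maxSep α i j = 0 :=
      le_antisymm (maxSep_le le_rfl fun S hS => (hz S hS).le) (maxSep_nonneg _ _ _)
    have h2 : maxSep β i j = 0 := by
      refine le_antisymm (maxSep_le le_rfl fun S hS => ?_) (maxSep_nonneg _ _ _)
      have : ¬ 0 < α S := by simp [hz S hS]
      simp [hβ, this]
    simp [h1, h2, hsep]

lemma reverse_aux (y : Finset V → ℝ) (hy : ∀ S, 0 ≤ y S)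
    (π : V → V → ℝ) (hπ : ∀ i j, 0 ≤ π i j)
    (h : ∀ 𝕊 : Finset (Finset V),
      ∑ S ∈ 𝕊, y S ≤ ∑ i : V, ∑ j : V, if SepFam 𝕊 i j then π i j else 0) :
    ∀ n : ℕ, ∀ α : Finset V → ℝ, (∀ S, 0 ≤ α S) →
      ((Finset.univ.filter fun S => 0 < α S).image α).card ≤ n →
      ∑ S : Finset V, α S * y S ≤ ∑ i : V, ∑ j : V, maxSep α i j * π i j := by
  intro n
  induction n with
  | zero =>
    intro α hα hcard
    have himg : ((Finset.univ.filter fun S => 0 < α S).image α) = ∅ :=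
      Finset.card_eq_zero.mp (Nat.le_zero.mp hcard)
    have hαz : ∀ S, α S = 0 := by
      intro S
      by_contra hne
      have hpos : 0 < α S := lt_of_le_of_ne (hα S) (Ne.symm hne)
      have : α S ∈ ((Finset.univ.filter fun S => 0 < α S).image α) :=
        Finset.mem_image_of_mem _ (by simp [hpos])
      simp [himg] at this
    calc ∑ S : Finset V, α S * y S = 0 := by simp [hαz]
      _ ≤ _ := Finset.sum_nonneg fun i _ => Finset.sum_nonneg fun j _ =>
          mul_nonneg (maxSep_nonneg _ _ _) (hπ i j)
  | succ n ih =>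
    intro α hα hcard
    by_cases hc : ((Finset.univ.filter fun S => 0 < α S).image α).card ≤ n
    · exact ih α hα hc
    have hne : ((Finset.univ.filter fun S => 0 < α S).image α).Nonempty := by
      rw [Finset.nonempty_iff_ne_empty]
      intro h0
      simp [h0] at hc
    set m : ℝ := ((Finset.univ.filter fun S => 0 < α S).image α).min' hne with hmdef
    have hmmem : m ∈ ((Finset.univ.filter fun S => 0 < α S).image α) :=
      Finset.min'_mem _ hne
    obtain ⟨S0, hS0, hS0m⟩ := Finset.mem_image.mp hmmem
    have hmpos : 0 < m := hS0m ▸ (Finset.mem_filter.mp hS0).2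
    have hmin : ∀ S, 0 < α S → m ≤ α S := fun S hS =>
      Finset.min'_le _ _ (Finset.mem_image_of_mem _ (by simp [hS]))
    set β : Finset V → ℝ := fun S => if 0 < α S then α S - m else 0 with hβ
    have hβ0 : ∀ S, 0 ≤ β S := by
      intro S
      simp only [hβ]
      split
      · linarith [hmin S (by assumption)]
      · exact le_rfl
    set 𝕊 : Finset (Finset V) := Finset.univ.filter fun S => 0 < α S with h𝕊
    -- cardinality of positive values of β drops
    have hsub : ((Finset.univ.filter fun S => 0 < β S).image β) ⊆
        ((𝕊.image α).erase m).image (· - m) := by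
      intro x hx
      obtain ⟨S, hS, rfl⟩ := Finset.mem_image.mp hx
      have hβS : 0 < β S := (Finset.mem_filter.mp hS).2
      have hαS : 0 < α S := by
        by_contra hp
        simp [hβ, hp] at hβS
      have hβval : β S = α S - m := by simp [hβ, hαS]
      have hne' : α S ≠ m := by
        intro hh; rw [hβval, hh] at hβS; simp at hβS
      refine Finset.mem_image.mpr ⟨α S, Finset.mem_erase.mpr ⟨hne', ?_⟩, by rw [hβval]⟩
      exact Finset.mem_image_of_mem _ (by simp [h𝕊, hαS])
    have hcard' : ((Finset.univ.filter fun S => 0 < β S).image β).card ≤ n := by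
      have h1 := Finset.card_le_card hsub
      have h2 := Finset.card_image_le (s := (𝕊.image α).erase m) (f := (· - m))
      have h3 : ((𝕊.image α).erase m).card = (𝕊.image α).card - 1 :=
        Finset.card_erase_of_mem hmmem
      have h4 : (𝕊.image α).card ≤ n + 1 := hcard
      omega
    -- pointwise decomposition of α
    have hpt : ∀ S, α S = β S + (if S ∈ 𝕊 then m else 0) := by
      intro S
      by_cases hp : 0 < α S
      · simp [hβ, h𝕊, hp]
      · have : α S = 0 := le_antisymm (not_lt.mp hp) (hα S)
        simp [hβ, h𝕊, hp, this]
    have hLHS : ∑ S : Finset V, α S * y S =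
        (∑ S : Finset V, β S * y S) + m * ∑ S ∈ 𝕊, y S := by
      have : ∀ S, α S * y S = β S * y S + (if S ∈ 𝕊 then m * y S else 0) := by
        intro S
        rw [hpt S]
        ring_nf
        split <;> ring
      rw [Finset.sum_congr rfl fun S _ => this S, Finset.sum_add_distrib,
        Finset.sum_ite_mem, Finset.univ_inter, Finset.mul_sum]
    have hRHS : ∑ i : V, ∑ j : V, maxSep α i j * π i j =
        (∑ i : V, ∑ j : V, maxSep β i j * π i j) +
          m * ∑ i : V, ∑ j : V, (if SepFam 𝕊 i j then π i j else 0) := by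
      rw [Finset.mul_sum, ← Finset.sum_add_distrib]
      refine Finset.sum_congr rfl fun i _ => ?_
      rw [Finset.mul_sum, ← Finset.sum_add_distrib]
      refine Finset.sum_congr rfl fun j _ => ?_
      rw [maxSep_decomp hα hmpos hmin i j, ← hβ]
      by_cases hsep : SepFam 𝕊 i j <;> simp [h𝕊] at hsep ⊢ <;> simp [hsep] <;> ring
    rw [hLHS, hRHS]
    have h1 := ih β hβ0 hcard'
    have h2 := mul_le_mul_of_nonneg_left (h 𝕊) hmpos.le
    linarith

end Aux

/-- in the Farkas feasibility condition it suffices to check `α`'s taking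
only one positive value: the family of inequalities
`∑_S α_S y_S ≤ ∑_{(i,j)} (max_{S⊙(i,j)} α_S) π_{ij}` over all nonnegative `α` is
equivalent to the family of inequalities
`∑_{S ∈ 𝕊} y_S ≤ ∑_{(i,j) : 𝕊⊙(i,j)} π_{ij}` over all families `𝕊 ⊆ 2^V`. -/
theorem indicator_alphas_suffice {V : Type*} [Fintype V] [DecidableEq V]
    (y : Finset V → ℝ) (hy : ∀ S, 0 ≤ y S)
    (π : V → V → ℝ) (hπ : ∀ i j, 0 ≤ π i j) :
    (∀ α : Finset V → ℝ, (∀ S, 0 ≤ α S) →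
      ∑ S : Finset V, α S * y S ≤ ∑ i : V, ∑ j : V, maxSep α i j * π i j) ↔
    (∀ 𝕊 : Finset (Finset V),
      ∑ S ∈ 𝕊, y S ≤ ∑ i : V, ∑ j : V, if SepFam 𝕊 i j then π i j else 0) := by
  constructor
  · intro h 𝕊
    have := h (fun S => if S ∈ 𝕊 then 1 else 0) (fun S => by split <;> norm_num)
    have hL : ∑ S : Finset V, (if S ∈ 𝕊 then (1:ℝ) else 0) * y S = ∑ S ∈ 𝕊, y S := by
      rw [Finset.sum_congr rfl fun S _ => by rw [ite_mul, one_mul, zero_mul],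
        Finset.sum_ite_mem, Finset.univ_inter]
    have hR : ∀ i j, maxSep (fun S => if S ∈ 𝕊 then (1:ℝ) else 0) i j * π i j =
        if SepFam 𝕊 i j then π i j else 0 := by
      intro i j
      rw [maxSep_indicator 𝕊 zero_le_one i j, ite_mul, one_mul, zero_mul]
    calc ∑ S ∈ 𝕊, y S = ∑ S : Finset V, (if S ∈ 𝕊 then (1:ℝ) else 0) * y S := hL.symm
      _ ≤ ∑ i : V, ∑ j : V, maxSep (fun S => if S ∈ 𝕊 then (1:ℝ) else 0) i j * π i j := this
      _ = ∑ i : V, ∑ j : V, if SepFam 𝕊 i j then π i j else 0 := by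
          exact Finset.sum_congr rfl fun i _ => Finset.sum_congr rfl fun j _ => hR i j
  · intro h α hα
    exact reverse_aux y hy π hπ h _ α hα le_rfl
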